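/- The number of solutions z ∈ F_2^n of the Hidden Linear Function problem for q equals |L_q^⊥|, the cardinality of the orthogonal complement of L_q. -/
import Mathlib


open Finset

/-- The quadratic form q : F_2^n → Z_4. -/
def quadForm {n : ℕ} (A : Fin n → Fin n → ZMod 2) (b : Fin n → ZMod 2)
    (x : Fin n → ZMod 2) : ZMod 4 :=
  2 * ∑ p ∈ Finset.univ.filter (fun p : Fin n × Fin n => p.1 < p.2),
      ((A p.1 p.2).val : ZMod 4) * ((x p.1).val : ZMod 4) * ((x p.2).val : ZMod 4)
  + ∑ α : Fin n, ((b α).val : ZMod 4) * ((x α).val : ZMod 4)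

/-- The set L_q. -/
def Lset {n : ℕ} (A : Fin n → Fin n → ZMod 2) (b : Fin n → ZMod 2) :
    Set (Fin n → ZMod 2) :=
  {x | ∀ y, quadForm A b (x + y) = quadForm A b x + quadForm A b y}

/-- F_2 inner product. -/
def ip {n : ℕ} (z x : Fin n → ZMod 2) : ZMod 2 := ∑ α, z α * x α

/-- z is a solution of the Hidden Linear Function problem for q. -/
def IsSol {n : ℕ} (A : Fin n → Fin n → ZMod 2) (b : Fin n → ZMod 2)
    (z : Fin n → ZMod 2) : Prop :=
  ∀ x ∈ Lset A b, quadForm A b x = 2 * ((ip z x).val : ZMod 4)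

/-- Orthogonal complement of a set of vectors. -/
def perp {n : ℕ} (L : Set (Fin n → ZMod 2)) : Set (Fin n → ZMod 2) :=
  {y | ∀ x ∈ L, ip y x = 0}

-- aux
def dmap (c : ZMod 2) : ZMod 4 := 2 * (c.val : ZMod 4)

lemma dmap_add : ∀ a b : ZMod 2, dmap (a + b) = dmap a + dmap b := by decide
lemma dmap_inj : ∀ a b : ZMod 2, dmap a = dmap b → a = b := by decide
lemma zmod2_cases : ∀ c : ZMod 2, c = 0 ∨ c = 1 := by decide
lemma zmod4_half : ∀ a : ZMod 4, a + a = 0 → a = 0 ∨ a = 2 := by decide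
lemma zmod2_cancel : ∀ a b : ZMod 2, a + b + b = a := by decide
lemma zmod2_eq_iff : ∀ a b : ZMod 2, a + b = 0 → a = b := by decide

variable {n : ℕ} (A : Fin n → Fin n → ZMod 2) (b : Fin n → ZMod 2)

lemma quadForm_zero : quadForm A b 0 = 0 := by
  simp [quadForm]

def Lsub : Submodule (ZMod 2) (Fin n → ZMod 2) where
  carrier := Lset A b
  add_mem' := by
    intro x y hx hy w
    have h1 := hx (y + w)
    have h2 := hy w
    have h3 := hx y
    rw [add_assoc, h1, h2, h3]
    ring
  zero_mem' := by
    intro y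
    rw [zero_add, quadForm_zero, zero_add]
  smul_mem' := by
    intro c x hx
    rcases zmod2_cases c with h | h
    · subst h
      rw [zero_smul]
      intro y
      rw [zero_add, quadForm_zero, zero_add]
    · subst h
      rw [one_smul]
      exact hx

lemma quadForm_mem_range (x : Fin n → ZMod 2) (hx : x ∈ Lset A b) :
    quadForm A b x = 0 ∨ quadForm A b x = 2 := by
  have h := hx x
  have hxx : x + x = 0 := by
    funext i
    simp only [Pi.add_apply, Pi.zero_apply]
    rcases zmod2_cases (x i) with h' | h' <;> rw [h'] <;> decide
  rw [hxx, quadForm_zero] at h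
  exact zmod4_half _ h.symm

noncomputable def ellFun (x : Fin n → ZMod 2) : ZMod 2 :=
  if quadForm A b x = 2 then 1 else 0

lemma dmap_ellFun (x : Fin n → ZMod 2) (hx : x ∈ Lset A b) :
    dmap (ellFun A b x) = quadForm A b x := by
  rcases quadForm_mem_range A b x hx with h | h <;>
    simp [ellFun, h, dmap] <;> decide

noncomputable def ell : Lsub A b →ₗ[ZMod 2] ZMod 2 where
  toFun x := ellFun A b x
  map_add' := by
    intro x y
    apply dmap_inj
    simp only [dmap_add]
    rw [dmap_ellFun A b _ ((x + y).2), dmap_ellFun A b _ x.2, dmap_ellFun A b _ y.2]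
    simpa using x.2 y
  map_smul' := by
    intro c x
    rcases zmod2_cases c with h | h <;> subst h
    · apply dmap_inj
      simp only [zero_smul, smul_eq_mul, zero_mul, RingHom.id_apply,
        ZeroMemClass.coe_zero]
      rw [dmap_ellFun A b _ ((Lsub A b).zero_mem), quadForm_zero]
      simp [dmap]
    · simp

lemma exists_sol : ∃ z₀, IsSol A b z₀ := by
  obtain ⟨g, hg⟩ := LinearMap.exists_extend (ell A b)
  refine ⟨fun α => g (fun j => if α = j then 1 else 0), ?_⟩
  intro x hx
  have hgx : g x = ell A b ⟨x, hx⟩ := by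
    have := congrFun (congrArg DFunLike.coe hg) ⟨x, hx⟩
    simpa using this
  have hrep : g x = ip (fun α => g (fun j => if α = j then 1 else 0)) x := by
    rw [LinearMap.pi_apply_eq_sum_univ g x, ip]
    refine Finset.sum_congr rfl fun i _ => ?_
    rw [smul_eq_mul, mul_comm]
  have : quadForm A b x = dmap (g x) := by
    rw [hgx, ← dmap_ellFun A b x hx]
    rfl
  rw [this, hrep, dmap]

lemma ip_add_left (z w x : Fin n → ZMod 2) : ip (z + w) x = ip z x + ip w x := by
  simp [ip, add_mul, Finset.sum_add_distrib]

lemma vec_cancel (a c : Fin n → ZMod 2) : a + c + c = a := by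
  funext i
  exact zmod2_cancel (a i) (c i)

/-- The number of solutions of the Hidden Linear Function problem
for q equals the cardinality of the orthogonal complement of L_q. -/
theorem card_solutions_eq_card_perp (n : ℕ) (hn : 1 ≤ n)
    (A : Fin n → Fin n → ZMod 2) (b : Fin n → ZMod 2) :
    Nat.card ↥{z : Fin n → ZMod 2 | IsSol A b z} = Nat.card ↥(perp (Lset A b)) := by
  obtain ⟨z₀, hz₀⟩ := exists_sol A b
  have key : ∀ z, IsSol A b z ↔ (z + z₀) ∈ perp (Lset A b) := by
    intro z
    constructor
    · intro hz x hx
      rw [ip_add_left]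
      have h1 := hz x hx
      have h2 := hz₀ x hx
      have heq : ip z x = ip z₀ x := by
        apply dmap_inj
        rw [dmap, dmap, ← h1, ← h2]
      rw [heq]
      rcases zmod2_cases (ip z₀ x) with h | h <;> rw [h] <;> decide
    · intro hz x hx
      have h0 := hz x hx
      rw [ip_add_left] at h0
      have heq : ip z x = ip z₀ x := zmod2_eq_iff _ _ h0
      rw [heq]
      exact hz₀ x hx
  apply Nat.card_congr
  refine ⟨fun z => ⟨z.1 + z₀, (key z.1).mp z.2⟩,
    fun y => ⟨y.1 + z₀, (key _).mpr (by rw [vec_cancel]; exact y.2)⟩,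
    fun z => Subtype.ext (vec_cancel _ _),
    fun y => Subtype.ext (vec_cancel _ _)⟩
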